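/- Let γ : ℝ → ℝ³ be a C² curve with |γ'| ≡ 1, γ(s+ℓ) = γ(s) + a for all s (ℓ > 0, a ∈ ℝ³), and |γ''(s)| ≤ 1/r for all s with r > 0. Let Γ : ℝ → ℝ³ be Lipschitz with |Γ'(s)| = 1 for a.e. s and Γ(s+L) = Γ(s) + a for all s (L > 0). Let p : ℝ → ℝ be continuous with p(s+L) = p(s) + ℓ for all s and sup_{s ∈ ℝ} |Γ(s) − γ(p(s))| < r/8. Then there exists a unique continuous function σ : ℝ → ℝ satisfying, for all s ∈ ℝ: (1) σ(s+L) = σ(s) + ℓ; (2) |Γ(s) − γ(σ(s))| < r/8; (3) (Γ(s) − γ(σ(s))) · γ'(σ(s)) = 0; (4) |σ(s) − p(s)| < r/4. -/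

import Mathlib

noncomputable section
open Real MeasureTheory

/-- `ℝ³` as Euclidean space. -/
abbrev R3 : Type := EuclideanSpace ℝ (Fin 3)

/-- Corollary 3.5: existence and uniqueness of a reparametrization
of `γ` for `Γ`. -/
theorem stmt2
    (γ : ℝ → R3) (hγ : ContDiff ℝ 2 γ)
    (harcγ : ∀ s : ℝ, ‖deriv γ s‖ = 1)
    (ℓ : ℝ) (hℓ : 0 < ℓ) (a : R3) (hperγ : ∀ s : ℝ, γ (s + ℓ) = γ s + a)
    (r : ℝ) (hr : 0 < r)
    (hcurv : ∀ s : ℝ, ‖deriv (deriv γ) s‖ ≤ 1 / r)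
    (Γ : ℝ → R3) (hΓlip : ∃ K : NNReal, LipschitzWith K Γ)
    (harcΓ : ∀ᵐ s : ℝ ∂volume, ‖deriv Γ s‖ = 1)
    (L : ℝ) (hL : 0 < L) (hperΓ : ∀ s : ℝ, Γ (s + L) = Γ s + a)
    (p : ℝ → ℝ) (hp : Continuous p) (hpper : ∀ s : ℝ, p (s + L) = p s + ℓ)
    (hclose : (⨆ s : ℝ, ‖Γ s - γ (p s)‖) < r / 8) :
    ∃! σ : ℝ → ℝ, Continuous σ ∧ ∀ s : ℝ,
      σ (s + L) = σ s + ℓ ∧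
      ‖Γ s - γ (σ s)‖ < r / 8 ∧
      (inner ℝ (Γ s - γ (σ s)) (deriv γ (σ s)) : ℝ) = 0 ∧
      |σ s - p s| < r / 4 := by
  classical
  obtain ⟨K, hK⟩ := hΓlip
  have hΓc : Continuous Γ := hK.continuous
  have hγd : Differentiable ℝ γ := hγ.differentiable (by norm_num)
  have hγ'd : Differentiable ℝ (deriv γ) := by
    have h2 : ContDiff ℝ ((1 : ℕ) + 1) γ := by exact_mod_cast hγ
    exact (contDiff_succ_iff_deriv.mp h2).2.2.differentiable (by norm_num)
  have hγ'c : Continuous (deriv γ) := hγ'd.continuous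
  -- γ is 1-Lipschitz
  have hγlip : ∀ x y : ℝ, ‖γ y - γ x‖ ≤ |y - x| := by
    intro x y
    have := convex_univ.norm_image_sub_le_of_norm_deriv_le (f := γ)
      (fun z _ => hγd z) (fun z _ => (harcγ z).le) (Set.mem_univ x)
      (Set.mem_univ y)
    simpa using this
  -- the key scalar function
  set g : ℝ → ℝ → ℝ := fun s t => (inner ℝ (Γ s - γ t) (deriv γ t) : ℝ) with hg
  have hgc : ∀ s, Continuous (g s) :=
    fun s => Continuous.inner (continuous_const.sub hγd.continuous) hγ'c
  have hGc : ∀ c : ℝ, Continuous (fun s => g s c) :=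
    fun c => Continuous.inner (hΓc.sub continuous_const) continuous_const
  -- derivative of g s
  have hgder : ∀ s t, HasDerivAt (g s)
      ((inner ℝ (Γ s - γ t) (deriv (deriv γ) t) : ℝ) - 1) t := by
    intro s t
    have h1 : HasDerivAt (fun t => Γ s - γ t) (-(deriv γ t)) t :=
      (hγd t).hasDerivAt.const_sub _
    have h2 : HasDerivAt (deriv γ) (deriv (deriv γ) t) t := (hγ'd t).hasDerivAt
    have h3 := h1.inner ℝ h2
    refine h3.congr_deriv ?_
    rw [inner_neg_left, real_inner_self_eq_norm_sq, harcγ t]; ring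
  -- sup bound gives pointwise bound
  have hclose' : ∀ s, ‖Γ s - γ (p s)‖ < r / 8 := by
    set F : ℝ → ℝ := fun s => ‖Γ s - γ (p s)‖ with hF
    have hFc : Continuous F := (hΓc.sub (hγd.continuous.comp hp)).norm
    have hFper : Function.Periodic F L := by
      intro s
      have : Γ (s + L) - γ (p (s + L)) = Γ s - γ (p s) := by
        rw [hpper, hperΓ, hperγ]; abel
      simp only [hF, this]
    have hbdd : BddAbove (Set.range F) := by
      have himage : Set.range F ⊆ F '' Set.Icc 0 L := by
        rintro _ ⟨s, rfl⟩
        exact ⟨s - ⌊s / L⌋ * L, ⟨Int.sub_floor_div_mul_nonneg s hL,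
          (Int.sub_floor_div_mul_lt s hL).le⟩, hFper.sub_int_mul_eq ⌊s / L⌋⟩
      exact (isCompact_Icc.image hFc).bddAbove.mono himage
    exact fun s => lt_of_le_of_lt (le_ciSup hbdd s) hclose
  -- bound on the interval
  have hA : ∀ s, ∀ t ∈ Set.Icc (p s - r / 4) (p s + r / 4), ‖Γ s - γ t‖ < 3 * r / 8 := by
    intro s t ht
    have h1 : ‖Γ s - γ t‖ ≤ ‖Γ s - γ (p s)‖ + ‖γ (p s) - γ t‖ := by
      have := norm_sub_le_norm_sub_add_norm_sub (Γ s) (γ (p s)) (γ t)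
      linarith
    have h2 : ‖γ (p s) - γ t‖ ≤ |p s - t| := by
      have := hγlip t (p s); simpa using this
    have h3 : |p s - t| ≤ r / 4 := by
      rw [abs_le]; constructor <;> [linarith [ht.2]; linarith [ht.1]]
    have h4 := hclose' s
    linarith
  -- derivative bound on the interval
  have hdneg : ∀ s, ∀ t ∈ Set.Icc (p s - r / 4) (p s + r / 4),
      (inner ℝ (Γ s - γ t) (deriv (deriv γ) t) : ℝ) - 1 ≤ -(5 / 8) := by
    intro s t ht
    have h1 := real_inner_le_norm (Γ s - γ t) (deriv (deriv γ) t)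
    have h2 := hcurv t
    have h3 := (hA s t ht).le
    have h4 : ‖Γ s - γ t‖ * ‖deriv (deriv γ) t‖ ≤ (3 * r / 8) * (1 / r) :=
      mul_le_mul h3 h2 (norm_nonneg _) (by positivity)
    have h5 : (3 * r / 8) * (1 / r) = 3 / 8 := by field_simp
    linarith
  -- g s is strictly antitone on the interval
  have hanti : ∀ s, StrictAntiOn (g s) (Set.Icc (p s - r / 4) (p s + r / 4)) := by
    intro s
    apply strictAntiOn_of_deriv_neg (convex_Icc _ _) (hgc s).continuousOn
    intro t ht
    rw [interior_Icc] at ht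
    rw [(hgder s t).deriv]
    have := hdneg s t (Set.Ioo_subset_Icc_self ht)
    linarith
  -- value at p s
  have hgps : ∀ s, |g s (p s)| < r / 8 := by
    intro s
    have h1 := abs_real_inner_le_norm (Γ s - γ (p s)) (deriv γ (p s))
    rw [harcγ, mul_one] at h1
    exact lt_of_le_of_lt h1 (hclose' s)
  -- values at the endpoints
  have hpos : ∀ s, 0 < g s (p s - r / 4) := by
    intro s
    obtain ⟨c, hc, hceq⟩ := exists_hasDerivAt_eq_slope (g s)
      (fun t => (inner ℝ (Γ s - γ t) (deriv (deriv γ) t) : ℝ) - 1)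
      (by linarith : p s - r / 4 < p s) (hgc s).continuousOn
      (fun t _ => hgder s t)
    have hcmem : c ∈ Set.Icc (p s - r / 4) (p s + r / 4) := by
      constructor <;> [exact hc.1.le; linarith [hc.2]]
    have hb := hdneg s c hcmem
    have habs := abs_lt.mp (hgps s)
    rw [show p s - (p s - r / 4) = r / 4 by ring] at hceq
    have hslope : g s (p s) - g s (p s - r / 4) =
        ((inner ℝ (Γ s - γ c) (deriv (deriv γ) c) : ℝ) - 1) * (r / 4) :=
      (div_eq_iff (by positivity : (r : ℝ) / 4 ≠ 0)).mp hceq.symm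
    nlinarith
  have hneg : ∀ s, g s (p s + r / 4) < 0 := by
    intro s
    obtain ⟨c, hc, hceq⟩ := exists_hasDerivAt_eq_slope (g s)
      (fun t => (inner ℝ (Γ s - γ t) (deriv (deriv γ) t) : ℝ) - 1)
      (by linarith : p s < p s + r / 4) (hgc s).continuousOn
      (fun t _ => hgder s t)
    have hcmem : c ∈ Set.Icc (p s - r / 4) (p s + r / 4) := by
      constructor <;> [linarith [hc.1]; exact hc.2.le]
    have hb := hdneg s c hcmem
    have habs := abs_lt.mp (hgps s)
    rw [show p s + r / 4 - p s = r / 4 by ring] at hceq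
    have hslope : g s (p s + r / 4) - g s (p s) =
        ((inner ℝ (Γ s - γ c) (deriv (deriv γ) c) : ℝ) - 1) * (r / 4) :=
      (div_eq_iff (by positivity : (r : ℝ) / 4 ≠ 0)).mp hceq.symm
    nlinarith
  -- existence of a zero
  have hexist : ∀ s, ∃ t ∈ Set.Ioo (p s - r / 4) (p s + r / 4), g s t = 0 := by
    intro s
    have h0 : (0 : ℝ) ∈ Set.Ioo (g s (p s + r / 4)) (g s (p s - r / 4)) :=
      ⟨hneg s, hpos s⟩
    have := intermediate_value_Ioo' (by linarith : p s - r / 4 ≤ p s + r / 4)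
      (hgc s).continuousOn h0
    obtain ⟨t, ht, ht0⟩ := this
    exact ⟨t, ht, ht0⟩
  -- pointwise uniqueness of the zero
  have huniq : ∀ s, ∀ t₁ ∈ Set.Icc (p s - r / 4) (p s + r / 4),
      ∀ t₂ ∈ Set.Icc (p s - r / 4) (p s + r / 4),
      g s t₁ = 0 → g s t₂ = 0 → t₁ = t₂ := by
    intro s t₁ h₁ t₂ h₂ e₁ e₂
    exact (hanti s).injOn h₁ h₂ (by rw [e₁, e₂])
  -- define σ
  set σ : ℝ → ℝ := fun s => (hexist s).choose with hσdef
  have hσmem : ∀ s, σ s ∈ Set.Ioo (p s - r / 4) (p s + r / 4) :=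
    fun s => (hexist s).choose_spec.1
  have hσ0 : ∀ s, g s (σ s) = 0 := fun s => (hexist s).choose_spec.2
  have hσmem' : ∀ s, σ s ∈ Set.Icc (p s - r / 4) (p s + r / 4) :=
    fun s => Set.Ioo_subset_Icc_self (hσmem s)
  have hσ4 : ∀ s, |σ s - p s| < r / 4 := by
    intro s
    have := hσmem s
    rw [abs_lt]; constructor <;> [linarith [this.1]; linarith [this.2]]
  -- condition (2)
  have hσ2 : ∀ s, ‖Γ s - γ (σ s)‖ < r / 8 := by
    intro s
    have key : ‖Γ s - γ (σ s)‖ ≤ ‖Γ s - γ (p s)‖ := by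
      have hhder : ∀ t, HasDerivAt (fun t => (inner ℝ (Γ s - γ t) (Γ s - γ t) : ℝ))
          (-2 * g s t) t := by
        intro t
        have h1 : HasDerivAt (fun t => Γ s - γ t) (-(deriv γ t)) t :=
          (hγd t).hasDerivAt.const_sub _
        have h3 := h1.inner ℝ h1
        refine h3.congr_deriv ?_
        rw [inner_neg_right, inner_neg_left]
        simp only [hg]
        rw [real_inner_comm (deriv γ t) (Γ s - γ t)]
        ring
      have hcont : Continuous (fun t => (inner ℝ (Γ s - γ t) (Γ s - γ t) : ℝ)) :=
        Continuous.inner (continuous_const.sub hγd.continuous)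
          (continuous_const.sub hγd.continuous)
      have hsq : (inner ℝ (Γ s - γ (σ s)) (Γ s - γ (σ s)) : ℝ) ≤
          (inner ℝ (Γ s - γ (p s)) (Γ s - γ (p s)) : ℝ) := by
        rcases le_total (σ s) (p s) with hle | hle
        · have hmono : MonotoneOn (fun t => (inner ℝ (Γ s - γ t) (Γ s - γ t) : ℝ))
              (Set.Icc (σ s) (p s)) := by
            apply monotoneOn_of_deriv_nonneg (convex_Icc _ _) hcont.continuousOn
              (fun t _ => ((hhder t).differentiableAt).differentiableWithinAt)
            intro t ht
            rw [interior_Icc] at ht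
            rw [(hhder t).deriv]
            have htmem : t ∈ Set.Icc (p s - r / 4) (p s + r / 4) := by
              constructor <;> [linarith [(hσmem s).1, ht.1]; linarith [ht.2]]
            have : g s t < g s (σ s) := hanti s (hσmem' s) htmem ht.1
            rw [hσ0 s] at this
            linarith
          exact hmono (Set.left_mem_Icc.mpr hle) (Set.right_mem_Icc.mpr hle) hle
        · have hmono : AntitoneOn (fun t => (inner ℝ (Γ s - γ t) (Γ s - γ t) : ℝ))
              (Set.Icc (p s) (σ s)) := by
            apply antitoneOn_of_deriv_nonpos (convex_Icc _ _) hcont.continuousOn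
              (fun t _ => ((hhder t).differentiableAt).differentiableWithinAt)
            intro t ht
            rw [interior_Icc] at ht
            rw [(hhder t).deriv]
            have htmem : t ∈ Set.Icc (p s - r / 4) (p s + r / 4) := by
              constructor <;> [linarith [ht.1]; linarith [(hσmem s).2, ht.2]]
            have : g s (σ s) < g s t := hanti s htmem (hσmem' s) ht.2
            rw [hσ0 s] at this
            linarith
          exact hmono (Set.left_mem_Icc.mpr hle) (Set.right_mem_Icc.mpr hle) hle
      rw [real_inner_self_eq_norm_sq, real_inner_self_eq_norm_sq] at hsq
      nlinarith [norm_nonneg (Γ s - γ (σ s)), norm_nonneg (Γ s - γ (p s))]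
    exact lt_of_le_of_lt key (hclose' s)
  -- periodicity of deriv γ
  have hγ'per : ∀ t, deriv γ (t + ℓ) = deriv γ t := by
    intro t
    have h1 : deriv (fun u => γ (u + ℓ)) t = deriv γ (t + ℓ) := deriv_comp_add_const γ ℓ t
    have h2 : (fun u => γ (u + ℓ)) = fun u => γ u + a := funext hperγ
    rw [h2] at h1
    rw [← h1, deriv_add_const]
  have hgper : ∀ s t, g (s + L) (t + ℓ) = g s t := by
    intro s t
    simp only [hg]
    rw [hperΓ, hperγ, hγ'per]
    congr 1
    abel
  -- periodicity of σ
  have hσper : ∀ s, σ (s + L) = σ s + ℓ := by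
    intro s
    refine huniq (s + L) _ (hσmem' (s + L)) (σ s + ℓ) ?_ (hσ0 (s + L)) ?_
    · rw [hpper]
      have := hσmem' s
      constructor <;> [linarith [this.1]; linarith [this.2]]
    · rw [hgper]; exact hσ0 s
  -- continuity of σ
  have hσcont : Continuous σ := by
    rw [continuous_iff_continuousAt]
    intro s₀
    rw [ContinuousAt, Metric.tendsto_nhds]
    intro ε hε
    set δ₁ : ℝ := min (σ s₀ - (p s₀ - r / 4)) ((p s₀ + r / 4) - σ s₀) with hδ₁
    have hδ₁pos : 0 < δ₁ :=
      lt_min (by linarith [(hσmem s₀).1]) (by linarith [(hσmem s₀).2])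
    set ε' : ℝ := min ε (δ₁ / 3) with hε'
    have hε'pos : 0 < ε' := lt_min hε (by linarith)
    have hε'le : ε' ≤ ε := min_le_left _ _
    have hε'le3 : ε' ≤ δ₁ / 3 := min_le_right _ _
    have hδ₁l : δ₁ ≤ σ s₀ - (p s₀ - r / 4) := min_le_left _ _
    have hδ₁r : δ₁ ≤ (p s₀ + r / 4) - σ s₀ := min_le_right _ _
    -- endpoints membership at s₀
    have hmem₀l : σ s₀ - ε' ∈ Set.Icc (p s₀ - r / 4) (p s₀ + r / 4) := by
      constructor <;> [linarith; linarith [(hσmem s₀).2]]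
    have hmem₀r : σ s₀ + ε' ∈ Set.Icc (p s₀ - r / 4) (p s₀ + r / 4) := by
      constructor <;> [linarith [(hσmem s₀).1]; linarith]
    have hgl : 0 < g s₀ (σ s₀ - ε') := by
      have := hanti s₀ hmem₀l (hσmem' s₀) (by linarith)
      rw [hσ0 s₀] at this; linarith
    have hgr : g s₀ (σ s₀ + ε') < 0 := by
      have := hanti s₀ (hσmem' s₀) hmem₀r (by linarith)
      rw [hσ0 s₀] at this; linarith
    have h1 : ∀ᶠ s in nhds s₀, |p s - p s₀| < δ₁ / 3 := by
      have := Metric.tendsto_nhds.mp (hp.continuousAt (x := s₀)) (δ₁ / 3) (by linarith)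
      simpa [Real.dist_eq] using this
    have h2 : ∀ᶠ s in nhds s₀, 0 < g s (σ s₀ - ε') :=
      (hGc (σ s₀ - ε')).continuousAt.eventually_mem (isOpen_Ioi.mem_nhds hgl)
    have h3 : ∀ᶠ s in nhds s₀, g s (σ s₀ + ε') < 0 :=
      (hGc (σ s₀ + ε')).continuousAt.eventually_mem (isOpen_Iio.mem_nhds hgr)
    filter_upwards [h1, h2, h3] with s hs1 hs2 hs3
    have hs1' := abs_lt.mp hs1
    have hmeml : σ s₀ - ε' ∈ Set.Icc (p s - r / 4) (p s + r / 4) := by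
      constructor <;> [linarith; linarith [(hσmem s₀).2]]
    have hmemr : σ s₀ + ε' ∈ Set.Icc (p s - r / 4) (p s + r / 4) := by
      constructor <;> [linarith [(hσmem s₀).1]; linarith]
    have hlt1 : σ s₀ - ε' < σ s := by
      by_contra hcon
      push_neg at hcon
      rcases eq_or_lt_of_le hcon with heq | hlt
      · rw [← heq] at hs2; rw [hσ0 s] at hs2; linarith
      · have := hanti s (hσmem' s) hmeml hlt
        rw [hσ0 s] at this; linarith
    have hlt2 : σ s < σ s₀ + ε' := by
      by_contra hcon
      push_neg at hcon
      rcases eq_or_lt_of_le hcon with heq | hlt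
      · rw [heq] at hs3; rw [hσ0 s] at hs3; linarith
      · have := hanti s hmemr (hσmem' s) hlt
        rw [hσ0 s] at this; linarith
    rw [Real.dist_eq, abs_lt]
    constructor <;> linarith
  -- assemble
  refine ⟨σ, ⟨hσcont, fun s => ⟨hσper s, hσ2 s, hσ0 s, hσ4 s⟩⟩, ?_⟩
  rintro τ ⟨-, hτ⟩
  funext s
  obtain ⟨-, -, hτ3, hτ4⟩ := hτ s
  have hτmem : τ s ∈ Set.Icc (p s - r / 4) (p s + r / 4) := by
    have := abs_lt.mp hτ4
    constructor <;> [linarith [this.1]; linarith [this.2]]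
  exact huniq s (τ s) hτmem (σ s) (hσmem' s) hτ3 (hσ0 s)
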